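/- Let p ∈ (0,2), ε > 0, α > 0, and let a = (a_k)_{k≥1} and b = (b_k)_{k≥1} be nonincreasing nonnegative real sequences in ℓ² with ‖a − b‖_{ℓ²} ≤ ε and M := sup_{n≥1} n^{1/p} a_n < ∞. Then #{i : b_i ≥ α} ≤ 4ε²/α² + 2^p M^p α^{−p}. -/

import Mathlib

/-- **Counting lemma, weak-ℓᵖ case.** If `a, b` are nonincreasing nonnegative ℓ² sequences
with `‖a - b‖_{ℓ²} ≤ ε` and `a` has weak-ℓᵖ bound `M` (i.e. `n^{1/p} a_n ≤ M` for `n ≥ 1`,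
written 0-indexed), then `#{i : b_i ≥ α} ≤ 4ε²/α² + 2ᵖ Mᵖ α⁻ᵖ`. -/
theorem count_above_threshold_wlp (p : ℝ) (hp0 : 0 < p) (hp2 : p < 2)
    (ε α : ℝ) (hε : 0 < ε) (hα : 0 < α)
    (a b : ℕ → ℝ) (ha : Antitone a) (hb : Antitone b)
    (ha0 : ∀ k, 0 ≤ a k) (hb0 : ∀ k, 0 ≤ b k)
    (hal2 : Memℓp a 2) (hbl2 : Memℓp b 2)
    (hdist : Real.sqrt (∑' k : ℕ, (a k - b k) ^ 2) ≤ ε)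
    (M : ℝ) (hM : ∀ n : ℕ, ((n : ℝ) + 1) ^ (1/p) * a n ≤ M) :
    (({i : ℕ | α ≤ b i}).ncard : ℝ)
      ≤ 4 * ε ^ 2 / α ^ 2 + 2 ^ p * M ^ p * α ^ (-p) := by
  have h2 : (0:ℝ) < (2 : ENNReal).toReal := by norm_num
  have hbsum : Summable fun k => (b k) ^ 2 := by
    have := hbl2.summable h2
    simpa [Real.rpow_natCast, abs_of_nonneg (hb0 _)] using this
  have hdsum : Summable fun k => (a k - b k) ^ 2 := by
    have := (hal2.sub hbl2).summable h2
    simpa [Real.rpow_natCast, sq_abs, Pi.sub_apply] using this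
  have hM0 : 0 ≤ M := le_trans (ha0 0) (by simpa using hM 0)
  -- finiteness
  have hfin : ({i : ℕ | α ≤ b i}).Finite := by
    have h := hbsum.tendsto_cofinite_zero
    have hev : ∀ᶠ k in Filter.cofinite, (b k) ^ 2 < α ^ 2 :=
      h.eventually (gt_mem_nhds (by positivity))
    refine (Filter.eventually_cofinite.mp hev).subset ?_
    intro i hi
    simp only [Set.mem_setOf_eq] at hi ⊢
    exact not_lt.mpr (pow_le_pow_left₀ hα.le hi 2)
  set F := hfin.toFinset with hF
  have hcard : ({i : ℕ | α ≤ b i}).ncard = F.card :=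
    Set.ncard_eq_toFinset_card _ hfin
  set T1 := F.filter (fun i => a i < α/2) with hT1
  set T2 := F.filter (fun i => ¬ a i < α/2) with hT2
  have hsplit : T1.card + T2.card = F.card :=
    Finset.card_filter_add_card_filter_not _
  -- tsum bound
  have htsum : (∑' k : ℕ, (a k - b k)^2) ≤ ε^2 := by
    have h0 : 0 ≤ ∑' k : ℕ, (a k - b k)^2 := tsum_nonneg fun k => sq_nonneg _
    nlinarith [Real.sq_sqrt h0, Real.sqrt_nonneg (∑' k : ℕ, (a k - b k)^2)]
  -- bound T1
  have hb1 : (T1.card : ℝ) * (α/2)^2 ≤ ε^2 := by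
    calc (T1.card : ℝ) * (α/2)^2 = ∑ _i ∈ T1, (α/2)^2 := by
          rw [Finset.sum_const, nsmul_eq_mul]
      _ ≤ ∑ i ∈ T1, (a i - b i)^2 := by
          apply Finset.sum_le_sum
          intro i hi
          have h := Finset.mem_filter.mp hi
          have hbi : α ≤ b i := (hfin.mem_toFinset).mp h.1
          have hai : a i < α/2 := h.2
          nlinarith [ha0 i]
      _ ≤ ∑' k, (a k - b k)^2 := Summable.sum_le_tsum T1 (fun i _ => sq_nonneg _) hdsum
      _ ≤ ε^2 := htsum
  have c1 : (T1.card : ℝ) ≤ 4 * ε^2 / α^2 := by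
    rw [le_div_iff₀ (by positivity : (0:ℝ) < α^2)]
    nlinarith
  -- bound T2
  have c2 : (T2.card : ℝ) ≤ 2^p * M^p * α^(-p) := by
    rcases T2.eq_empty_or_nonempty with h | h
    · rw [h]; simp; positivity
    · set m := T2.max' h with hm
      have hmem := T2.max'_mem h
      have hmf := Finset.mem_filter.mp hmem
      have hm2 : α/2 ≤ a m := not_lt.mp hmf.2
      have hsub : T2 ⊆ Finset.range (m + 1) := fun i hi =>
        Finset.mem_range.mpr (Nat.lt_succ_of_le (Finset.le_max' _ _ hi))
      have hcard2 : (T2.card : ℝ) ≤ (m : ℝ) + 1 := by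
        have := Finset.card_le_card hsub
        rw [Finset.card_range] at this
        exact_mod_cast this
      have hx : (0:ℝ) ≤ (m:ℝ) + 1 := by positivity
      have h1 : ((m:ℝ)+1)^(1/p) ≤ M/(α/2) := by
        rw [le_div_iff₀ (by positivity)]
        calc ((m:ℝ)+1)^(1/p) * (α/2) ≤ ((m:ℝ)+1)^(1/p) * a m :=
              mul_le_mul_of_nonneg_left hm2 (Real.rpow_nonneg hx _)
          _ ≤ M := hM m
      have h2' : (m:ℝ)+1 ≤ (M/(α/2))^p := by
        have hr := Real.rpow_le_rpow (Real.rpow_nonneg hx _) h1 hp0.le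
        rwa [one_div, Real.rpow_inv_rpow hx hp0.ne'] at hr
      have heq : (M/(α/2))^p = 2^p * M^p * α^(-p) := by
        have : M/(α/2) = 2 * M * α⁻¹ := by field_simp
        rw [this, Real.mul_rpow (by positivity) (by positivity),
          Real.mul_rpow (by norm_num) hM0, Real.inv_rpow hα.le,
          Real.rpow_neg hα.le]
      linarith [heq ▸ h2']
  rw [hcard, ← hsplit]
  push_cast
  linarith
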